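/- Let m ∈ ℝ^d, let sᵢ be the sign of mᵢ (with sᵢ ∈ {−1,1}), let ε ≥ 0, and let K = { y : Σᵢ yᵢ sᵢ ≤ ε, yᵢ sᵢ ≥ 0 ∀i }. For μ ≥ 0 define y(μ) by yᵢ(μ) = sᵢ · max(sᵢ mᵢ − μ, 0). If μ* ≥ 0 satisfies Σᵢ yᵢ(μ*) sᵢ ≤ ε, and moreover μ* = 0 or Σᵢ yᵢ(μ*) sᵢ = ε, then y(μ*) is the Euclidean projection of m onto K. -/
import Mathlib


/-- Water-filling formula for the projection onto K: if μ* ≥ 0 satisfies the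
complementary-slackness conditions, then y(μ*), with yᵢ(μ) = sᵢ(sᵢmᵢ − μ)⁺,
is the Euclidean projection of m onto K = { y : Σᵢ yᵢsᵢ ≤ ε, yᵢsᵢ ≥ 0 }. -/
theorem waterfilling_is_projection (d : ℕ) (m s : Fin d → ℝ)
    (hs : ∀ i, (0 < m i → s i = 1) ∧ (m i < 0 → s i = -1) ∧ (s i = 1 ∨ s i = -1))
    (ε : ℝ) (hε : 0 ≤ ε) (μstar : ℝ) (hμ : 0 ≤ μstar)
    (hfeas : ∑ i, (s i * max (s i * m i - μstar) 0) * s i ≤ ε)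
    (hcompl : μstar = 0 ∨ ∑ i, (s i * max (s i * m i - μstar) 0) * s i = ε) :
    ((∑ i, (s i * max (s i * m i - μstar) 0) * s i ≤ ε ∧
        ∀ i, 0 ≤ (s i * max (s i * m i - μstar) 0) * s i) ∧
      ∀ z : Fin d → ℝ, (∑ i, z i * s i ≤ ε ∧ ∀ i, 0 ≤ z i * s i) →
        ∑ i, (m i - s i * max (s i * m i - μstar) 0) ^ 2 ≤
          ∑ i, (m i - z i) ^ 2) := by
  have hss : ∀ i, s i * s i = 1 := by
    intro i; rcases (hs i).2.2 with h | h <;> rw [h] <;> norm_num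
  set b : Fin d → ℝ := fun i => max (s i * m i - μstar) 0 with hbdef
  have hbnn : ∀ i, 0 ≤ b i := fun i => le_max_right _ _
  have hrw : ∀ i, (s i * b i) * s i = b i := by
    intro i
    calc (s i * b i) * s i = b i * (s i * s i) := by ring
    _ = b i := by rw [hss i]; ring
  have hsum : ∑ i, (s i * b i) * s i = ∑ i, b i :=
    Finset.sum_congr rfl fun i _ => hrw i
  -- bounds on c i = s i * m i - b i
  have hc : ∀ i, 0 ≤ s i * m i - b i ∧ s i * m i - b i ≤ μstar := by
    intro i
    have ha : 0 ≤ s i * m i := by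
      rcases lt_trichotomy (m i) 0 with h | h | h
      · rw [(hs i).2.1 h]; nlinarith
      · simp [h]
      · rw [(hs i).1 h]; nlinarith
    rcases le_total (s i * m i - μstar) 0 with h | h
    · have : b i = 0 := max_eq_right h
      rw [this]; constructor <;> linarith
    · have : b i = s i * m i - μstar := max_eq_left h
      rw [this]; constructor <;> linarith
  refine ⟨⟨hfeas, fun i => (hrw i) ▸ hbnn i⟩, ?_⟩
  rintro z ⟨hz1, hz2⟩
  -- key variational inequality
  have key : 0 ≤ ∑ i, (m i - s i * b i) * (s i * b i - z i) := by
    have step1 : ∀ i, (m i - s i * b i) * (s i * b i - z i)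
        = (s i * m i - b i) * (b i - z i * s i) := by
      intro i
      linear_combination (m i * z i - b i ^ 2) * hss i
    have hμb : ∀ i, (s i * m i - b i) * b i = μstar * b i := by
      intro i
      rcases le_total (s i * m i - μstar) 0 with h | h
      · have hb0 : b i = 0 := max_eq_right h
        rw [hb0]; ring
      · have hb0 : b i = s i * m i - μstar := max_eq_left h
        rw [hb0]; ring
    have hμz : ∀ i, (s i * m i - b i) * (z i * s i) ≤ μstar * (z i * s i) :=
      fun i => mul_le_mul_of_nonneg_right (hc i).2 (hz2 i)
    have hsplit : ∑ i, (s i * m i - b i) * (b i - z i * s i)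
        = ∑ i, (s i * m i - b i) * b i - ∑ i, (s i * m i - b i) * (z i * s i) := by
      rw [← Finset.sum_sub_distrib]
      exact Finset.sum_congr rfl fun i _ => by ring
    have h1 : ∑ i, (s i * m i - b i) * b i = μstar * ∑ i, b i := by
      rw [Finset.mul_sum]
      exact Finset.sum_congr rfl fun i _ => hμb i
    have h2 : ∑ i, (s i * m i - b i) * (z i * s i) ≤ μstar * ε := by
      calc ∑ i, (s i * m i - b i) * (z i * s i) ≤ ∑ i, μstar * (z i * s i) :=
            Finset.sum_le_sum fun i _ => hμz i
      _ = μstar * ∑ i, z i * s i := by rw [Finset.mul_sum]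
      _ ≤ μstar * ε := mul_le_mul_of_nonneg_left hz1 hμ
    have h3 : μstar * ε ≤ μstar * ∑ i, b i := by
      rcases hcompl with h | h
      · rw [h]; simp
      · rw [hsum] at h; rw [h]
    calc (0:ℝ) ≤ μstar * ∑ i, b i - ∑ i, (s i * m i - b i) * (z i * s i) := by linarith
    _ = ∑ i, (s i * m i - b i) * (b i - z i * s i) := by rw [hsplit, h1]
    _ = ∑ i, (m i - s i * b i) * (s i * b i - z i) :=
        Finset.sum_congr rfl fun i _ => (step1 i).symm
  have hexp : ∑ i, (m i - z i) ^ 2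
      = ∑ i, (m i - s i * b i) ^ 2 + ∑ i, (s i * b i - z i) ^ 2
        + 2 * ∑ i, (m i - s i * b i) * (s i * b i - z i) := by
    rw [Finset.mul_sum, ← Finset.sum_add_distrib, ← Finset.sum_add_distrib]
    exact Finset.sum_congr rfl fun i _ => by ring
  have hsq : 0 ≤ ∑ i, (s i * b i - z i) ^ 2 :=
    Finset.sum_nonneg fun i _ => sq_nonneg _
  linarith
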